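/- If p is a possibly causal path from node A to node Y in a maximally oriented PDAG G, then some subsequence of the nodes of p forms a possibly causal unshielded path from A to Y in G. -/

import Mathlib

/-- A partially directed graph: directed edges `dir` and undirected edges `undir`. -/
structure PDAG (V : Type) where
  dir : V → V → Prop
  undir : V → V → Prop
  undir_symm : ∀ a b, undir a b → undir b a

namespace PDAG

variable {V : Type}

/-- Two nodes are adjacent if joined by a directed or undirected edge. -/
def adj (G : PDAG V) (a b : V) : Prop := G.dir a b ∨ G.dir b a ∨ G.undir a b

/-- Each pair of nodes is joined by at most one edge, and no self loops. -/
def Wellformed (G : PDAG V) : Prop :=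
  (∀ a b, ¬ (G.dir a b ∧ G.dir b a)) ∧ (∀ a b, ¬ (G.dir a b ∧ G.undir a b)) ∧
  (∀ a, ¬ G.undir a a)

/-- No directed cycles. -/
def Acyclic (G : PDAG V) : Prop := ∀ a, ¬ Relation.TransGen G.dir a a

/-- Closure under Meek's orientation rules R1–R4. -/
def MeekClosed (G : PDAG V) : Prop :=
  (∀ a b c, G.dir a b → G.undir b c → ¬ G.adj a c → G.dir b c) ∧
  (∀ a b c, G.dir a c → G.dir c b → G.undir a b → G.dir a b) ∧
  (∀ a b c d, G.undir a b → G.undir a c → G.undir a d → G.dir c b → G.dir d b →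
    ¬ G.adj c d → G.dir a b) ∧
  (∀ a b c d, G.undir d a → G.undir d b → G.undir d c → G.dir a b → G.dir b c →
    ¬ G.adj a c → G.dir d c)

/-- A maximally oriented PDAG. -/
def IsMPDAG (G : PDAG V) : Prop := G.Wellformed ∧ G.Acyclic ∧ G.MeekClosed

/-- A DAG: acyclic, no undirected edges. -/
def IsDAG (G : PDAG V) : Prop := G.Wellformed ∧ G.Acyclic ∧ ∀ a b, ¬ G.undir a b

/-- A path: at least two distinct nodes, consecutive ones adjacent. -/
def IsPath (G : PDAG V) (p : List V) : Prop :=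
  2 ≤ p.length ∧ p.Nodup ∧ List.Chain' G.adj p

/-- Possibly causal path: no edge `Vi ← Vj` in `G` for `i < j` among the path's nodes. -/
def PossiblyCausal (G : PDAG V) (p : List V) : Prop :=
  p.Pairwise (fun a b => ¬ G.dir b a)

/-- Causal path: every consecutive edge directed forwards. -/
def Causal (G : PDAG V) (p : List V) : Prop := List.Chain' G.dir p

/-- Unshielded path: endpoints of every consecutive triple are nonadjacent. -/
def Unshielded (G : PDAG V) (p : List V) : Prop :=
  ∀ a b c, [a, b, c] <:+: p → ¬ G.adj a c

/-- Proper path w.r.t. `A`: only the first node is in `A`. -/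
def ProperFrom (A : Set V) (p : List V) : Prop :=
  ∃ a t, p = a :: t ∧ a ∈ A ∧ ∀ x ∈ t, x ∉ A

/-- The path ends in the set `Y`. -/
def EndsIn (p : List V) (Y : Set V) : Prop := ∃ y, p.getLast? = some y ∧ y ∈ Y

/-- The path starts with an undirected edge. -/
def StartsUndir (G : PDAG V) (p : List V) : Prop :=
  ∃ a b t, p = a :: b :: t ∧ G.undir a b

/-- The path starts with a directed edge. -/
def StartsDir (G : PDAG V) (p : List V) : Prop :=
  ∃ a b t, p = a :: b :: t ∧ G.dir a b

/-- A proper possibly causal path from `A` to `Y`. -/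
def PPCPath (G : PDAG V) (A Y : Set V) (p : List V) : Prop :=
  G.IsPath p ∧ G.PossiblyCausal p ∧ ProperFrom A p ∧ EndsIn p Y

/-- Perković's identifiability condition: every proper possibly causal path from `A`
to `Y` starts with a directed edge. -/
def IdCond (G : PDAG V) (A Y : Set V) : Prop :=
  ∀ p, G.PPCPath A Y p → G.StartsDir p

/-- A violating path: proper possibly causal from `A` to `Y` starting with an
undirected edge. -/
def ViolPath (G : PDAG V) (A Y : Set V) (p : List V) : Prop :=
  G.PPCPath A Y p ∧ G.StartsUndir p

/-- A shortest violating path. -/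
def ShortestViol (G : PDAG V) (A Y : Set V) (p : List V) : Prop :=
  G.ViolPath A Y p ∧ ∀ q, G.ViolPath A Y q → p.length ≤ q.length

/-- Same adjacencies. -/
def SameAdj (G' G : PDAG V) : Prop := ∀ a b, G'.adj a b ↔ G.adj a b

/-- Same unshielded colliders. -/
def SameUC (G' G : PDAG V) : Prop :=
  ∀ a b c, (G'.dir a b ∧ G'.dir c b ∧ ¬ G'.adj a c) ↔
    (G.dir a b ∧ G.dir c b ∧ ¬ G.adj a c)

/-- `G'` is represented by `G`: same adjacencies, same unshielded colliders, and
every directed edge of `G` appears in `G'`. -/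
def RepresentedBy (G' G : PDAG V) : Prop :=
  SameAdj G' G ∧ SameUC G' G ∧ ∀ a b, G.dir a b → G'.dir a b

/-- `G1 = MPDAG(G, {A1 → V1})`: the least maximally oriented graph represented by `G`
containing the orientation `A1 → V1`. -/
def IsOrientClosure (G : PDAG V) (A1 V1 : V) (G1 : PDAG V) : Prop :=
  G1.IsMPDAG ∧ RepresentedBy G1 G ∧ G1.dir A1 V1 ∧
  (∀ a b, G1.undir a b ↔ (G.adj a b ∧ ¬ G1.dir a b ∧ ¬ G1.dir b a)) ∧
  (∀ H : PDAG V, H.IsMPDAG → RepresentedBy H G → H.dir A1 V1 →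
    ∀ a b, G1.dir a b → H.dir a b)

end PDAG

private lemma stmt0_aux {V : Type} (G : PDAG V) :
    ∀ n (p : List V), p.length ≤ n → G.IsPath p → G.PossiblyCausal p →
    ∃ q : List V, q.Sublist p ∧ G.IsPath q ∧ G.PossiblyCausal q ∧ G.Unshielded q ∧
      q.head? = p.head? ∧ q.getLast? = p.getLast? := by
  intro n
  induction n with
  | zero =>
    intro p hl hp _
    have := hp.1; omega
  | succ n ih =>
    intro p hl hp hpc
    by_cases hu : G.Unshielded p
    · exact ⟨p, List.Sublist.refl _, hp, hpc, hu, rfl, rfl⟩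
    · unfold PDAG.Unshielded at hu
      push_neg at hu
      obtain ⟨a, b, c, hinf, hadj⟩ := hu
      obtain ⟨s, t, hst⟩ := hinf
      subst hst
      set p' : List V := s ++ [a, c] ++ t with hp'
      have hsub : p'.Sublist (s ++ [a, b, c] ++ t) := by
        apply List.Sublist.append_right
        apply List.Sublist.append_left
        exact (List.Sublist.cons _ (List.Sublist.refl _)).cons₂ _
      have hlen : p'.length ≤ n := by
        simp only [hp', List.length_append, List.length_cons] at hl ⊢
        simp at hl ⊢; omega
      have hchain : List.Chain' G.adj p' := by
        have h := hp.2.2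
        unfold List.Chain' at h
        rw [List.append_assoc, List.isChain_append] at h
        obtain ⟨h1, h2, h3⟩ := h
        rw [hp']
        unfold List.Chain'
        rw [List.append_assoc, List.isChain_append]
        refine ⟨h1, ?_, ?_⟩
        · simp only [List.cons_append, List.isChain_cons_cons] at h2 ⊢
          exact ⟨hadj, h2.2.2⟩
        · intro x hx y hy
          apply h3 x hx
          simpa using hy
      have hp'path : G.IsPath p' := by
        refine ⟨?_, hp.2.1.sublist hsub, hchain⟩
        simp [hp', List.length_append]; omega
      have hp'pc : G.PossiblyCausal p' := hpc.sublist hsub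
      obtain ⟨q, hq1, hq2, hq3, hq4, hq5, hq6⟩ := ih p' hlen hp'path hp'pc
      refine ⟨q, hq1.trans hsub, hq2, hq3, hq4, ?_, ?_⟩
      · rw [hq5]; cases s <;> simp [hp']
      · rw [hq6]
        rcases t.eq_nil_or_concat with rfl | ⟨t', z, rfl⟩
        · simp [hp']
        · simp [hp']

/-- If `p` is a possibly causal path from `A` to `Y` in an MPDAG `G`, then some
subsequence of `p` forms a possibly causal unshielded path from `A` to `Y` in `G`. -/
theorem stmt0 {V : Type} (G : PDAG V) (hG : G.IsMPDAG) (p : List V) (A Y : V)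
    (hp : G.IsPath p) (hpc : G.PossiblyCausal p)
    (hA : p.head? = some A) (hY : p.getLast? = some Y) :
    ∃ q : List V, q.Sublist p ∧ G.IsPath q ∧ G.PossiblyCausal q ∧ G.Unshielded q ∧
      q.head? = some A ∧ q.getLast? = some Y := by
  obtain ⟨q, h1, h2, h3, h4, h5, h6⟩ := stmt0_aux G p.length p le_rfl hp hpc
  exact ⟨q, h1, h2, h3, h4, h5.trans hA, h6.trans hY⟩
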